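/- Single-term cross-correlation bound under approximate uniformity: if the conditional distribution q of x_j given x_i = x' satisfies q = uniform + q' with ‖q'‖₁ ≤ λ^t, p is subnormalized, and p(x)ρ_x ≤ 2^{-h}ρ for all x, then Σ_x q(x) p(x') p(x) Tr[ρ_{x'} ρ^{-1/2} ρ_x ρ^{-1/2}] ≤ p(x')/|X| + p(x') 2^{-h} λ^t. -/

import Mathlib

open scoped BigOperators ComplexOrder

/-- Apply a real function to a Hermitian matrix via its spectral decomposition
(zero if the matrix is not Hermitian). -/
noncomputable def matFun {n : Type*} [Fintype n] [DecidableEq n]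
    (A : Matrix n n ℂ) (f : ℝ → ℝ) : Matrix n n ℂ :=
  if h : A.IsHermitian then h.cfc f else 0

/-- Moore–Penrose pseudoinverse power of a Hermitian matrix: eigenvalue `0` is sent to `0`,
nonzero eigenvalues `t` to `t ^ r`. -/
noncomputable def pinvPow {n : Type*} [Fintype n] [DecidableEq n]
    (A : Matrix n n ℂ) (r : ℝ) : Matrix n n ℂ :=
  matFun A (fun t => if t = 0 then 0 else Real.rpow t r)

/-- Matrix logarithm (base 2) on the support of a Hermitian matrix. -/
noncomputable def matLog2 {n : Type*} [Fintype n] [DecidableEq n]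
    (A : Matrix n n ℂ) : Matrix n n ℂ :=
  matFun A (fun t => if t = 0 then 0 else Real.logb 2 t)

/-- Schatten 1-norm (trace norm) of a complex matrix: the trace of `√(Aᴴ A)`. -/
noncomputable def traceNorm {n : Type*} [Fintype n] [DecidableEq n]
    (A : Matrix n n ℂ) : ℝ :=
  (((Matrix.posSemidef_conjTranspose_mul_self A).1.eigenvectorUnitary.1 *
    Matrix.diagonal ((fun r : ℝ => (r : ℂ)) ∘ Real.sqrt ∘ (Matrix.posSemidef_conjTranspose_mul_self A).1.eigenvalues) *
    (star (Matrix.posSemidef_conjTranspose_mul_self A).1.eigenvectorUnitary : Matrix n n ℂ)).trace).re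

/-- Schatten 2-norm (Frobenius norm) of a complex matrix. -/
noncomputable def frobNorm {n : Type*} [Fintype n] [DecidableEq n]
    (A : Matrix n n ℂ) : ℝ :=
  Real.sqrt (((A.conjTranspose * A).trace).re)

/-- Squared Frobenius norm. -/
noncomputable def frobSq {n : Type*} [Fintype n] [DecidableEq n]
    (A : Matrix n n ℂ) : ℝ :=
  ((A.conjTranspose * A).trace).re

/-- Schatten ∞-norm (operator norm): square root of the largest eigenvalue of `Aᴴ A`. -/
noncomputable def matOpNorm {n : Type*} [Fintype n] [DecidableEq n]
    (A : Matrix n n ℂ) : ℝ :=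
  Real.sqrt (⨆ i, (Matrix.posSemidef_conjTranspose_mul_self A).1.eigenvalues i)


section Helpers
variable {n : Type*} [Fintype n] [DecidableEq n]
set_option linter.unusedSectionVars false

lemma psd_smul {c : ℝ} (hc : 0 ≤ c) {M : Matrix n n ℂ} (hM : M.PosSemidef) :
    (c • M).PosSemidef := by
  refine Matrix.PosSemidef.of_dotProduct_mulVec_nonneg ?_ fun x => ?_
  · unfold Matrix.IsHermitian
    rw [Matrix.conjTranspose_smul, hM.1.eq, star_trivial]
  · have h2 : (0:ℂ) ≤ (c:ℂ) * dotProduct (star x) (M.mulVec x) :=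
      mul_nonneg (by exact_mod_cast hc) (hM.dotProduct_mulVec_nonneg x)
    calc (0:ℂ) ≤ (c:ℂ) * dotProduct (star x) (M.mulVec x) := h2
      _ = dotProduct (star x) ((c • M).mulVec x) := by
          rw [Matrix.smul_mulVec, dotProduct_smul]
          simp [Complex.real_smul]

lemma psd_diag_nonneg {M : Matrix n n ℂ} (hM : M.PosSemidef) (i : n) :
    (0:ℂ) ≤ M i i := by
  have h := hM.dotProduct_mulVec_nonneg (Pi.single i 1)
  simpa [Matrix.mulVec_single, dotProduct, Pi.single_apply, Finset.sum_ite_eq'] using h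

lemma psd_trace_re_nonneg {M : Matrix n n ℂ} (hM : M.PosSemidef) : 0 ≤ M.trace.re := by
  rw [Matrix.trace]
  rw [Complex.re_sum]
  exact Finset.sum_nonneg fun i _ => (Complex.le_def.mp (psd_diag_nonneg hM i)).1

open scoped MatrixOrder in
lemma trace_mul_re_nonneg {P Q : Matrix n n ℂ} (hP : P.PosSemidef) (hQ : Q.PosSemidef) :
    0 ≤ ((P * Q).trace).re := by
  have h1 : P * Q = CFC.sqrt P * (CFC.sqrt P * Q) := by
    rw [← mul_assoc, CFC.sqrt_mul_sqrt_self P hP.nonneg]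
  have h2 : (P * Q).trace = (CFC.sqrt P * Q * CFC.sqrt P).trace := by
    rw [h1, Matrix.trace_mul_comm, mul_assoc]
  rw [h2]
  have h3 : (CFC.sqrt P * Q * CFC.sqrt P).PosSemidef := by
    have := hQ.conjTranspose_mul_mul_same (CFC.sqrt P)
    rwa [(Matrix.LE.le.posSemidef (CFC.sqrt_nonneg P)).1.eq] at this
  exact psd_trace_re_nonneg h3


lemma key_proj {ρ : Matrix n n ℂ} (hρ : ρ.PosSemidef) :
    (pinvPow ρ (-(1/2:ℝ))).IsHermitian ∧
    (1 - pinvPow ρ (-(1/2:ℝ)) * ρ * pinvPow ρ (-(1/2:ℝ))).PosSemidef := by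
  set f : ℝ → ℝ := fun t => if t = 0 then 0 else Real.rpow t (-(1/2:ℝ)) with hf
  have hH : ρ.IsHermitian := hρ.1
  set U : Matrix n n ℂ := (Matrix.IsHermitian.eigenvectorUnitary hH : Matrix n n ℂ) with hU
  have hUU : star U * U = 1 := Matrix.mem_unitaryGroup_iff'.mp (Matrix.IsHermitian.eigenvectorUnitary hH).2
  have hUU' : U * star U = 1 := Matrix.mem_unitaryGroup_iff.mp (Matrix.IsHermitian.eigenvectorUnitary hH).2
  set E : Matrix n n ℂ := Matrix.diagonal (RCLike.ofReal ∘ hH.eigenvalues) with hE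
  set F : Matrix n n ℂ := Matrix.diagonal (RCLike.ofReal ∘ f ∘ hH.eigenvalues) with hF
  have hspec : ρ = U * E * star U := hH.spectral_theorem
  have hBexp : pinvPow ρ (-(1/2:ℝ)) = U * F * star U := by
    rw [pinvPow, matFun, dif_pos hH]; rfl
  have hFherm : F.IsHermitian := by
    rw [hF]
    apply Matrix.isHermitian_diagonal_of_self_adjoint
    funext i
    simp [Function.comp_apply, RCLike.star_def, RCLike.conj_ofReal]
  have assoc : ∀ D1 D2 : Matrix n n ℂ, (U * D1 * star U) * (U * D2 * star U)
      = U * (D1 * D2) * star U := by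
    intro D1 D2
    calc (U * D1 * star U) * (U * D2 * star U)
        = U * D1 * (star U * U) * D2 * star U := by noncomm_ring
      _ = U * (D1 * D2) * star U := by rw [hUU]; noncomm_ring
  constructor
  · rw [hBexp, Matrix.star_eq_conjTranspose]
    exact (Matrix.isHermitian_mul_mul_conjTranspose U hFherm)
  · have hmulform : pinvPow ρ (-(1/2:ℝ)) * ρ * pinvPow ρ (-(1/2:ℝ))
        = U * (F * E * F) * star U := by
      rw [hBexp, hspec, assoc, assoc]
    have hFEF : F * E * F = Matrix.diagonal
        (fun i => (RCLike.ofReal (f (hH.eigenvalues i) * hH.eigenvalues i * f (hH.eigenvalues i)) : ℂ)) := by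
      rw [hF, hE, Matrix.diagonal_mul_diagonal, Matrix.diagonal_mul_diagonal]
      apply congrArg Matrix.diagonal
      funext i
      simp only [Function.comp_apply, Pi.mul_apply]
      push_cast
      ring
    have hsub : (1 : Matrix n n ℂ) - pinvPow ρ (-(1/2:ℝ)) * ρ * pinvPow ρ (-(1/2:ℝ))
        = U * (1 - F * E * F) * star U := by
      rw [hmulform, Matrix.mul_sub, Matrix.sub_mul, mul_one, hUU']
    have hmerge : (1 : Matrix n n ℂ) - F * E * F = Matrix.diagonal
        (fun i => (RCLike.ofReal (1 - f (hH.eigenvalues i) * hH.eigenvalues i * f (hH.eigenvalues i)) : ℂ)) := by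
      rw [hFEF, ← Matrix.diagonal_one]
      ext i j
      by_cases hij : i = j <;> simp [Matrix.diagonal_apply, hij]
    have hdiagPSD : (Matrix.diagonal
        (fun i => (RCLike.ofReal (1 - f (hH.eigenvalues i) * hH.eigenvalues i * f (hH.eigenvalues i)) : ℂ)) : Matrix n n ℂ).PosSemidef := by
      apply Matrix.PosSemidef.diagonal
      intro i
      have hev := hρ.eigenvalues_nonneg i
      set t := hH.eigenvalues i with ht
      have hle : f t * t * f t ≤ 1 := by
        by_cases h0 : t = 0
        · simp [hf, h0]
        · have htpos : 0 < t := lt_of_le_of_ne hev (Ne.symm h0)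
          have h2 : Real.rpow t (-(1/2:ℝ)) * Real.rpow t (-(1/2:ℝ)) = t⁻¹ := by
            show t ^ (-(1/2:ℝ)) * t ^ (-(1/2:ℝ)) = t⁻¹
            rw [← Real.rpow_add htpos]
            norm_num
            exact Real.rpow_neg_one t
          have heq1 : f t * t * f t = 1 := by
            simp only [hf, if_neg h0]
            calc Real.rpow t (-(1/2:ℝ)) * t * Real.rpow t (-(1/2:ℝ))
                = (Real.rpow t (-(1/2:ℝ)) * Real.rpow t (-(1/2:ℝ))) * t := by ring
              _ = t⁻¹ * t := by rw [h2]
              _ = 1 := inv_mul_cancel₀ h0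
          linarith [heq1.le]
      have hnn : (0:ℝ) ≤ 1 - f t * t * f t := by linarith
      simp only [Pi.zero_apply]
      exact Complex.zero_le_real.mpr hnn
    rw [hsub, hmerge]
    have hres := hdiagPSD.mul_mul_conjTranspose_same U
    rwa [← Matrix.star_eq_conjTranspose U] at hres

end Helpers

/-- Single-term cross-correlation bound under approximate uniformity: if the conditional
distribution `q` of `x_j` given `x_i = x'` satisfies `q = uniform + q'` with `‖q'‖₁ ≤ λ^t`,
`p` is subnormalized, and `p(x) ρₓ ≤ 2^{-h} ρ` for all `x`, then
`∑ₓ q(x) p(x') p(x) Tr[ρ_{x'} ρ^{-1/2} ρₓ ρ^{-1/2}] ≤ p(x')/|X| + p(x') 2^{-h} λ^t`. -/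



theorem stmt18 {X : Type*} [Fintype X] [Nonempty X] {d : ℕ}
    (p : X → ℝ) (hp0 : ∀ x, 0 ≤ p x) (hp1 : ∑ x, p x ≤ 1)
    (ρv : X → Matrix (Fin d) (Fin d) ℂ)
    (hρv : ∀ x, (ρv x).PosSemidef ∧ (ρv x).trace = 1)
    (ρ : Matrix (Fin d) (Fin d) ℂ) (hρ : ρ = ∑ x, (p x : ℝ) • ρv x)
    (h : ℝ) (hop : ∀ x, ((2 : ℝ) ^ (-h) • ρ - (p x : ℝ) • ρv x).PosSemidef)
    (lam : ℝ) (hlam : 0 ≤ lam) (t : ℕ)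
    (q q' : X → ℝ) (hq0 : ∀ x, 0 ≤ q x)
    (hdecomp : ∀ x, q x = 1 / (Fintype.card X : ℝ) + q' x)
    (hq'1 : ∑ x, |q' x| ≤ lam ^ t)
    (x' : X) :
    ∑ x, q x * (p x' * p x *
        ((ρv x' * pinvPow ρ (-(1/2 : ℝ)) * ρv x * pinvPow ρ (-(1/2 : ℝ))).trace).re)
      ≤ p x' / (Fintype.card X : ℝ) + p x' * (2 : ℝ) ^ (-h) * lam ^ t := by
  classical
  have hρPSD : ρ.PosSemidef := by
    rw [hρ]
    exact Finset.sum_induction _ Matrix.PosSemidef (fun a b ha hb => ha.add hb)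
      (Matrix.PosSemidef.zero) (fun x _ => psd_smul (hp0 x) (hρv x).1)
  obtain ⟨hBH, hProjPSD⟩ := key_proj hρPSD
  set B := pinvPow ρ (-(1/2:ℝ)) with hBdef
  set g : Matrix (Fin d) (Fin d) ℂ → ℝ := fun M => ((ρv x' * B * M * B).trace).re with hgdef
  have hassoc : ∀ M : Matrix (Fin d) (Fin d) ℂ, ρv x' * B * M * B = ρv x' * (B * M * B) := by
    intro M; noncomm_ring
  have hBMB : ∀ {M : Matrix (Fin d) (Fin d) ℂ}, M.PosSemidef → (B * M * B).PosSemidef := by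
    intro M hM
    have := hM.conjTranspose_mul_mul_same B
    rwa [hBH.eq] at this
  have hgnn : ∀ {M : Matrix (Fin d) (Fin d) ℂ}, M.PosSemidef → 0 ≤ g M := by
    intro M hM
    show 0 ≤ ((ρv x' * B * M * B).trace).re
    rw [hassoc]
    exact trace_mul_re_nonneg (hρv x').1 (hBMB hM)
  have hg_smul : ∀ (c : ℝ) (M : Matrix (Fin d) (Fin d) ℂ), g (c • M) = c * g M := by
    intro c M
    show ((ρv x' * B * (c • M) * B).trace).re = c * ((ρv x' * B * M * B).trace).re
    rw [mul_smul_comm, smul_mul_assoc, Matrix.trace_smul]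
    simp [Complex.real_smul]
  have hg_sub : ∀ M N : Matrix (Fin d) (Fin d) ℂ, g (M - N) = g M - g N := by
    intro M N
    show ((ρv x' * B * (M - N) * B).trace).re = _
    rw [Matrix.mul_sub, Matrix.sub_mul, Matrix.trace_sub, Complex.sub_re]
  have hg_sum : g ρ = ∑ x, p x * g (ρv x) := by
    conv_lhs => rw [hρ]
    show ((ρv x' * B * (∑ x, p x • ρv x) * B).trace).re = _
    rw [Matrix.mul_sum, Matrix.sum_mul, Matrix.trace_sum, Complex.re_sum]
    refine Finset.sum_congr rfl fun x _ => ?_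
    rw [← hg_smul]
  have h2h : (0:ℝ) ≤ (2:ℝ) ^ (-h) := Real.rpow_nonneg (by norm_num) _
  have hS1 : g ρ ≤ 1 := by
    have h1 : 0 ≤ ((ρv x' * (1 - B * ρ * B)).trace).re :=
      trace_mul_re_nonneg (hρv x').1 hProjPSD
    have h2 : ((ρv x' * (1 - B * ρ * B)).trace).re = 1 - g ρ := by
      rw [Matrix.mul_sub, mul_one, Matrix.trace_sub, Complex.sub_re, (hρv x').2]
      show (1:ℂ).re - _ = _
      rw [Complex.one_re]
      congr 1
      show ((ρv x' * (B * ρ * B)).trace).re = ((ρv x' * B * ρ * B).trace).re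
      rw [hassoc]
    linarith [h2 ▸ h1]
  have hkey : ∀ x, p x * g (ρv x) ≤ (2:ℝ) ^ (-h) := by
    intro x
    have h1 : 0 ≤ g ((2:ℝ) ^ (-h) • ρ - (p x : ℝ) • ρv x) := hgnn (hop x)
    rw [hg_sub, hg_smul, hg_smul] at h1
    nlinarith [hS1, hgnn hρPSD]
  set c : X → ℝ := fun x => p x' * p x * g (ρv x) with hc
  have hc0 : ∀ x, 0 ≤ c x := fun x =>
    mul_nonneg (mul_nonneg (hp0 x') (hp0 x)) (hgnn (hρv x).1)
  have hcb : ∀ x, c x ≤ p x' * (2:ℝ) ^ (-h) := by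
    intro x
    have : p x' * (p x * g (ρv x)) ≤ p x' * (2:ℝ) ^ (-h) :=
      mul_le_mul_of_nonneg_left (hkey x) (hp0 x')
    calc c x = p x' * (p x * g (ρv x)) := by rw [hc]; ring
      _ ≤ _ := this
  have hgoal_eq : ∀ x, q x * (p x' * p x *
        ((ρv x' * B * ρv x * B).trace).re) = q x * c x := fun x => rfl
  calc ∑ x, q x * (p x' * p x * ((ρv x' * B * ρv x * B).trace).re)
      = ∑ x, ((1 / (Fintype.card X : ℝ)) * c x + q' x * c x) := by
        refine Finset.sum_congr rfl fun x _ => ?_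
        rw [hgoal_eq, hdecomp x, add_mul]
    _ = (1 / (Fintype.card X : ℝ)) * ∑ x, c x + ∑ x, q' x * c x := by
        rw [Finset.sum_add_distrib, Finset.mul_sum]
    _ ≤ (1 / (Fintype.card X : ℝ)) * p x' + lam ^ t * (p x' * (2:ℝ) ^ (-h)) := by
        gcongr ?_ + ?_
        · apply mul_le_mul_of_nonneg_left _ (by positivity)
          have : ∑ x, c x = p x' * g ρ := by
            rw [hg_sum, Finset.mul_sum]
            exact Finset.sum_congr rfl fun x _ => by rw [hc]; ring
          rw [this]
          calc p x' * g ρ ≤ p x' * 1 := mul_le_mul_of_nonneg_left hS1 (hp0 x')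
            _ = p x' := mul_one _
        · calc ∑ x, q' x * c x ≤ ∑ x, |q' x| * (p x' * (2:ℝ) ^ (-h)) := by
                refine Finset.sum_le_sum fun x _ => ?_
                calc q' x * c x ≤ |q' x| * c x :=
                      mul_le_mul_of_nonneg_right (le_abs_self _) (hc0 x)
                  _ ≤ |q' x| * (p x' * (2:ℝ) ^ (-h)) :=
                      mul_le_mul_of_nonneg_left (hcb x) (abs_nonneg _)
            _ = (∑ x, |q' x|) * (p x' * (2:ℝ) ^ (-h)) := by rw [Finset.sum_mul]
            _ ≤ lam ^ t * (p x' * (2:ℝ) ^ (-h)) :=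
                mul_le_mul_of_nonneg_right hq'1 (mul_nonneg (hp0 x') h2h)
    _ = p x' / (Fintype.card X : ℝ) + p x' * (2:ℝ) ^ (-h) * lam ^ t := by ring
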